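/- Closed-form single-antenna sum capacity (equation (29)): take N = 1 in the pinching-antenna channel model with K ≥ 1 users at w_k = (x_k, y_k, 0), and assume 0 ≤ x_k ≤ L_max for every k. Then the supremum of the average sum rate R̄(v,p) over all feasible transmission strategies (v,p) equals log₂(1 + (P·η/σ²)·Σ_{k=1}^K (y_k² + d²)^{-1}). -/

import Mathlib

open MeasureTheory

noncomputable section

/-- Euclidean distance between two points of ℝ³ (represented as `ℝ × ℝ × ℝ`). -/
def dist3 (a b : ℝ × ℝ × ℝ) : ℝ :=
  Real.sqrt ((a.1 - b.1) ^ 2 + (a.2.1 - b.2.1) ^ 2 + (a.2.2 - b.2.2) ^ 2)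

/-- Feasible set of antenna x-coordinates: `0 ≤ v 0`, successive gaps at least `Δ`,
and `v (N-1) ≤ Lmax`. -/
def Vfeas (N : ℕ) (Δ Lmax : ℝ) : Set (Fin N → ℝ) :=
  {v | (∀ i : Fin N, (i : ℕ) = 0 → 0 ≤ v i) ∧
       (∀ i j : Fin N, (j : ℕ) = (i : ℕ) + 1 → Δ ≤ v j - v i) ∧
       (∀ i : Fin N, (i : ℕ) = N - 1 → v i ≤ Lmax)}

/-- Effective channel coefficient `γ(v̄; w)` of the pinching-antenna system, with
`η = λ²/(16π²)`, antenna `n` at `(v n, 0, d)` and feed point at `(-Dx/2, 0, d)`. -/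
def gamma (N : ℕ) (lam lamg d Dx : ℝ) (v : Fin N → ℝ) (w : ℝ × ℝ × ℝ) : ℂ :=
  ∑ n : Fin N,
    Complex.exp (-(Complex.I) * ((2 * Real.pi / lamg * dist3 (v n, 0, d) (-Dx / 2, 0, d) : ℝ) : ℂ)) *
      (((Real.sqrt (lam ^ 2 / (16 * Real.pi ^ 2)) : ℝ) : ℂ) *
        Complex.exp (-(Complex.I) * ((2 * Real.pi / lam * dist3 (v n, 0, d) w : ℝ) : ℂ)) /
        ((dist3 (v n, 0, d) w : ℝ) : ℂ))

/-- Channel power gain `|γ(v̄; w)|²`. -/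
def gain (N : ℕ) (lam lamg d Dx : ℝ) (v : Fin N → ℝ) (w : ℝ × ℝ × ℝ) : ℝ :=
  ‖gamma N lam lamg d Dx v w‖ ^ 2

/-- A feasible transmission strategy: measurable antenna trajectory taking values in the
feasible set, measurable nonnegative powers with per-user average power budget `P`. -/
def Feasible (N K : ℕ) (Δ Lmax T P : ℝ)
    (v : ℝ → Fin N → ℝ) (p : ℝ → Fin K → ℝ) : Prop :=
  Measurable v ∧ Measurable p ∧
  (∀ t ∈ Set.Ioc (0 : ℝ) T, v t ∈ Vfeas N Δ Lmax) ∧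
  (∀ t ∈ Set.Ioc (0 : ℝ) T, ∀ k, 0 ≤ p t k) ∧
  (∀ k, ∫⁻ t in Set.Ioc (0 : ℝ) T, ENNReal.ofReal (p t k) ≤ ENNReal.ofReal (T * P))

/-- Average sum rate of a transmission strategy over the period `(0, T]`. -/
def avgRate (N K : ℕ) (lam lamg d Dx σ2 T : ℝ) (w : Fin K → ℝ × ℝ × ℝ)
    (v : ℝ → Fin N → ℝ) (p : ℝ → Fin K → ℝ) : ℝ :=
  (1 / T) * ∫ t in Set.Ioc (0 : ℝ) T,
    Real.logb 2 (1 + (∑ k, p t k * gain N lam lamg d Dx (v t) (w k)) / (N * σ2))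

end

/-- closed-form single-antenna sum capacity, equation (29).
For `N = 1` with all users' x-coordinates inside `[0, Lmax]`, the supremum of the
average sum rate over all feasible transmission strategies equals
`log₂(1 + (P η / σ²) ∑ k, (y_k² + d²)⁻¹)` with `η = λ²/(16π²)`. -/
lemma gain_one (lam lamg d Dx : ℝ) (hd : 0 < d) (v : Fin 1 → ℝ)
    (w : ℝ × ℝ × ℝ) (hw : w.2.2 = 0) :
    gain 1 lam lamg d Dx v w
      = (lam ^ 2 / (16 * Real.pi ^ 2)) / ((v 0 - w.1) ^ 2 + (w.2.1 ^ 2 + d ^ 2)) := by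
  have hQ : (0:ℝ) < (v 0 - w.1) ^ 2 + (w.2.1 ^ 2 + d ^ 2) := by positivity
  have hr : dist3 (v 0, 0, d) w = Real.sqrt ((v 0 - w.1) ^ 2 + (w.2.1 ^ 2 + d ^ 2)) := by
    simp [dist3, hw]; ring_nf
  have hη : (0:ℝ) ≤ lam ^ 2 / (16 * Real.pi ^ 2) := by positivity
  simp only [gain, gamma, Fin.sum_univ_one, norm_mul, norm_div, Complex.norm_exp,
    Complex.norm_real, Real.norm_eq_abs, hr]
  simp only [Complex.neg_re, Complex.mul_re, Complex.I_re, Complex.ofReal_re,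
    Complex.I_im, Complex.ofReal_im, zero_mul, one_mul, mul_zero, sub_zero, zero_sub,
    neg_zero, Real.exp_zero, abs_of_nonneg (Real.sqrt_nonneg _)]
  rw [div_pow, mul_one, Real.sq_sqrt hη, Real.sq_sqrt hQ.le]

lemma logb_affine_bound {x c : ℝ} (hx : 0 ≤ x) (hc : 0 ≤ c) :
    Real.logb 2 (1 + x) ≤ Real.logb 2 (1 + c) + (x - c) / ((1 + c) * Real.log 2) := by
  have h1x : (0:ℝ) < 1 + x := by linarith
  have h1c : (0:ℝ) < 1 + c := by linarith
  have hlog2 : 0 < Real.log 2 := Real.log_pos one_lt_two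
  have h := Real.log_le_sub_one_of_pos (show (0:ℝ) < (1+x)/(1+c) by positivity)
  rw [Real.log_div h1x.ne' h1c.ne'] at h
  have key : Real.log (1+x) ≤ Real.log (1+c) + (x - c)/(1+c) := by
    have e : (1+x)/(1+c) - 1 = (x - c)/(1+c) := by field_simp; ring
    linarith [e ▸ h]
  have h2 : Real.log (1+x)/Real.log 2 ≤ (Real.log (1+c) + (x-c)/(1+c))/Real.log 2 := by
    gcongr
  rw [Real.logb, Real.logb]
  calc Real.log (1+x)/Real.log 2 ≤ (Real.log (1+c) + (x-c)/(1+c))/Real.log 2 := h2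
    _ = Real.log (1+c)/Real.log 2 + (x - c)/((1+c)*Real.log 2) := by rw [add_div, div_div]

lemma exists_interval {F : ℕ → ℝ} (hm : Monotone F) {K : ℕ} {t : ℝ}
    (h0 : F 0 < t) (hK : t ≤ F K) : ∃ m < K, t ∈ Set.Ioc (F m) (F (m+1)) := by
  induction K with
  | zero => linarith
  | succ n ih =>
    by_cases h : t ≤ F n
    · obtain ⟨m, hm', hmem⟩ := ih h
      exact ⟨m, Nat.lt_succ_of_lt hm', hmem⟩
    · exact ⟨n, Nat.lt_succ_self n, ⟨not_le.mp h, hK⟩⟩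

theorem single_antenna_sum_capacity
    (K : ℕ) (hK : 1 ≤ K)
    (lam lamg d Dx Δ Lmax T P σ2 : ℝ)
    (hlam : 0 < lam) (hlamg : 0 < lamg) (hd : 0 < d) (hΔ : 0 < Δ)
    (hLmax : 0 < Lmax) (hT : 0 < T) (hP : 0 < P) (hσ : 0 < σ2)
    (w : Fin K → ℝ × ℝ × ℝ) (hw : ∀ k, (w k).2.2 = 0)
    (hx : ∀ k, (w k).1 ∈ Set.Icc (0 : ℝ) Lmax) :
    sSup {r : ℝ | ∃ v p, Feasible 1 K Δ Lmax T P v p ∧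
        r = avgRate 1 K lam lamg d Dx σ2 T w v p}
      = Real.logb 2
          (1 + P * (lam ^ 2 / (16 * Real.pi ^ 2)) / σ2
              * ∑ k, ((w k).2.1 ^ 2 + d ^ 2)⁻¹) := by
  have hπ := Real.pi_pos
  set η : ℝ := lam ^ 2 / (16 * Real.pi ^ 2) with hη_def
  have hη : 0 < η := by positivity
  set g : Fin K → ℝ := fun k => η / ((w k).2.1 ^ 2 + d ^ 2) with hg_def
  have hQpos : ∀ k, (0:ℝ) < (w k).2.1 ^ 2 + d ^ 2 := fun k => by positivity
  have hg : ∀ k, 0 < g k := fun k => div_pos hη (hQpos k)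
  set G : ℝ := ∑ k, g k with hG_def
  have hNe : Nonempty (Fin K) := ⟨⟨0, hK⟩⟩
  have hG : 0 < G := Finset.sum_pos (fun k _ => hg k) Finset.univ_nonempty
  set c : ℝ := P * G / σ2 with hc_def
  have hc : 0 < c := by positivity
  set L : ℝ := Real.logb 2 (1 + c) with hL_def
  have hRHS : Real.logb 2 (1 + P * η / σ2 * ∑ k, ((w k).2.1 ^ 2 + d ^ 2)⁻¹) = L := by
    rw [hL_def]; congr 1
    have : G = η * ∑ k, ((w k).2.1 ^ 2 + d ^ 2)⁻¹ := by
      rw [Finset.mul_sum]; exact Finset.sum_congr rfl fun k _ => div_eq_mul_inv _ _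
    rw [hc_def, this]; ring
  rw [hRHS]
  -- gain rewriting
  have hgain : ∀ (vv : Fin 1 → ℝ) (k : Fin K), gain 1 lam lamg d Dx vv (w k)
      = η / ((vv 0 - (w k).1) ^ 2 + ((w k).2.1 ^ 2 + d ^ 2)) :=
    fun vv k => gain_one lam lamg d Dx hd vv (w k) (hw k)
  -- upper bound for any feasible strategy
  have hub : ∀ v p, Feasible 1 K Δ Lmax T P v p →
      avgRate 1 K lam lamg d Dx σ2 T w v p ≤ L := by
    intro v p hF
    obtain ⟨hv, hp, hVf, hpnn, hbud⟩ := hF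
    have hIoc : MeasurableSet (Set.Ioc (0:ℝ) T) := measurableSet_Ioc
    have hvol : volume (Set.Ioc (0:ℝ) T) = ENNReal.ofReal T := by
      rw [Real.volume_Ioc, sub_zero]
    have hvolR : (volume (Set.Ioc (0:ℝ) T)).toReal = T := by
      rw [hvol, ENNReal.toReal_ofReal hT.le]
    have hvol_lt : volume (Set.Ioc (0:ℝ) T) < ⊤ := by
      rw [hvol]; exact ENNReal.ofReal_lt_top
    have hlog2 : 0 < Real.log 2 := Real.log_pos one_lt_two
    set D : ℝ := (1 + c) * Real.log 2 with hD_def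
    have hD : 0 < D := mul_pos (by linarith) hlog2
    have hconst_int : ∀ r : ℝ, IntegrableOn (fun _ => r) (Set.Ioc (0:ℝ) T) :=
      fun r => integrableOn_const hvol_lt.ne
    have hpk_meas : ∀ k, Measurable (fun t => p t k) :=
      fun k => (measurable_pi_apply k).comp hp
    have hpk_nn : ∀ k, ∀ᵐ t ∂(volume.restrict (Set.Ioc (0:ℝ) T)), 0 ≤ p t k := by
      intro k
      filter_upwards [ae_restrict_mem hIoc] with t ht
      exact hpnn t ht k
    have hpk_int : ∀ k, IntegrableOn (fun t => p t k) (Set.Ioc (0:ℝ) T) := by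
      intro k
      refine ⟨(hpk_meas k).aestronglyMeasurable, ?_⟩
      rw [hasFiniteIntegral_iff_ofReal (hpk_nn k)]
      exact lt_of_le_of_lt (hbud k) ENNReal.ofReal_lt_top
    have hpk_budget : ∀ k, ∫ t in Set.Ioc (0:ℝ) T, p t k ≤ T * P := by
      intro k
      rw [integral_eq_lintegral_of_nonneg_ae (hpk_nn k) (hpk_meas k).aestronglyMeasurable]
      calc (∫⁻ t in Set.Ioc (0:ℝ) T, ENNReal.ofReal (p t k)).toReal
          ≤ (ENNReal.ofReal (T*P)).toReal :=
            ENNReal.toReal_mono ENNReal.ofReal_ne_top (hbud k)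
        _ = T*P := ENNReal.toReal_ofReal (by positivity)
    rw [avgRate]
    simp only [Nat.cast_one, one_mul]
    set S : ℝ → ℝ := fun t => (∑ k, p t k * gain 1 lam lamg d Dx (v t) (w k)) / σ2
      with hS_def
    set h : ℝ → ℝ := fun t => L + ((∑ k, p t k * g k)/σ2 - c)/D with hh_def
    have hsum_int : IntegrableOn (fun t => ∑ k, p t k * g k) (Set.Ioc (0:ℝ) T) :=
      integrable_finset_sum _ (fun k _ => (hpk_int k).mul_const (g k))
    have hh_int : IntegrableOn h (Set.Ioc (0:ℝ) T) := by
      apply (hconst_int L).add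
      exact ((hsum_int.div_const σ2).sub (hconst_int c)).div_const D
    have hgain_nn : ∀ t k, 0 ≤ gain 1 lam lamg d Dx (v t) (w k) := fun t k => sq_nonneg _
    have hgain_le : ∀ t k, gain 1 lam lamg d Dx (v t) (w k) ≤ g k := by
      intro t k
      rw [hgain]
      show η / ((v t 0 - (w k).1) ^ 2 + ((w k).2.1 ^ 2 + d ^ 2)) ≤ η / ((w k).2.1 ^ 2 + d ^ 2)
      exact div_le_div_of_nonneg_left hη.le (hQpos k)
        (by linarith [sq_nonneg (v t 0 - (w k).1)])
    have hS_nn : ∀ t ∈ Set.Ioc (0:ℝ) T, 0 ≤ S t := by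
      intro t ht
      apply div_nonneg _ hσ.le
      exact Finset.sum_nonneg fun k _ => mul_nonneg (hpnn t ht k) (hgain_nn t k)
    have hS_le : ∀ t ∈ Set.Ioc (0:ℝ) T, S t ≤ (∑ k, p t k * g k)/σ2 := by
      intro t ht
      show (∑ k, p t k * gain 1 lam lamg d Dx (v t) (w k)) / σ2 ≤ (∑ k, p t k * g k)/σ2
      apply (div_le_div_iff_of_pos_right hσ).mpr
      exact Finset.sum_le_sum fun k _ =>
        mul_le_mul_of_nonneg_left (hgain_le t k) (hpnn t ht k)
    have hfh : ∀ t ∈ Set.Ioc (0:ℝ) T, Real.logb 2 (1 + S t) ≤ h t := by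
      intro t ht
      calc Real.logb 2 (1 + S t) ≤ Real.logb 2 (1 + c) + (S t - c)/((1+c)*Real.log 2) :=
            logb_affine_bound (hS_nn t ht) hc.le
        _ = L + (S t - c)/D := by rw [hL_def, hD_def]
        _ ≤ L + ((∑ k, p t k * g k)/σ2 - c)/D :=
            add_le_add_right ((div_le_div_iff_of_pos_right hD).mpr (by linarith [hS_le t ht])) L
        _ = h t := rfl
    have hS_meas : Measurable S := by
      apply Measurable.div _ measurable_const
      apply Finset.measurable_sum
      intro k _
      apply (hpk_meas k).mul
      simp only [hgain]
      apply Measurable.div measurable_const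
      apply Measurable.add _ measurable_const
      exact (((measurable_pi_apply 0).comp hv).sub_const _).pow_const 2
    have hf_meas : Measurable (fun t => Real.logb 2 (1 + S t)) := by
      show Measurable fun t => Real.log (1 + S t) / Real.log 2
      exact (Real.measurable_log.comp (measurable_const.add hS_meas)).div_const _
    have hf_nn : ∀ t ∈ Set.Ioc (0:ℝ) T, 0 ≤ Real.logb 2 (1 + S t) := by
      intro t ht
      exact Real.logb_nonneg one_lt_two (by linarith [hS_nn t ht])
    have hf_int : IntegrableOn (fun t => Real.logb 2 (1 + S t)) (Set.Ioc (0:ℝ) T) := by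
      apply Integrable.mono hh_int hf_meas.aestronglyMeasurable
      filter_upwards [ae_restrict_mem hIoc] with t ht
      rw [Real.norm_eq_abs, Real.norm_eq_abs, abs_of_nonneg (hf_nn t ht)]
      exact (hfh t ht).trans (le_abs_self _)
    have hint : ∫ t in Set.Ioc (0:ℝ) T, Real.logb 2 (1 + S t)
        ≤ ∫ t in Set.Ioc (0:ℝ) T, h t := by
      apply integral_mono_ae hf_int hh_int
      filter_upwards [ae_restrict_mem hIoc] with t ht
      exact hfh t ht
    have hh_val : ∫ t in Set.Ioc (0:ℝ) T, h t ≤ T * L := by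
      show ∫ t in Set.Ioc (0:ℝ) T, (L + ((∑ k, p t k * g k)/σ2 - c)/D) ≤ T * L
      have hsub_int : IntegrableOn (fun t => (∑ k, p t k * g k)/σ2 - c) (Set.Ioc (0:ℝ) T) :=
        (hsum_int.div_const σ2).sub (hconst_int c)
      rw [integral_add (hconst_int L) (hsub_int.div_const D)]
      rw [setIntegral_const, measureReal_def, hvolR, smul_eq_mul]
      have hsum_val : ∫ t in Set.Ioc (0:ℝ) T, (∑ k, p t k * g k) ≤ T * P * G := by
        rw [integral_finset_sum _ (fun k _ => (hpk_int k).mul_const (g k))]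
        calc ∑ k, ∫ t in Set.Ioc (0:ℝ) T, p t k * g k
            = ∑ k, (∫ t in Set.Ioc (0:ℝ) T, p t k) * g k := by
              exact Finset.sum_congr rfl fun k _ => integral_mul_const _ _
          _ ≤ ∑ k, (T * P) * g k :=
              Finset.sum_le_sum fun k _ =>
                mul_le_mul_of_nonneg_right (hpk_budget k) (hg k).le
          _ = T * P * G := by rw [hG_def, Finset.mul_sum]
      have h2 : ∫ t in Set.Ioc (0:ℝ) T, ((∑ k, p t k * g k)/σ2 - c)/D ≤ 0 := by
        rw [integral_div, integral_sub (hsum_int.div_const σ2) (hconst_int c)]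

        rw [integral_div, setIntegral_const, measureReal_def, hvolR, smul_eq_mul]
        apply div_nonpos_of_nonpos_of_nonneg _ hD.le
        have : T * c = T * P * G / σ2 := by rw [hc_def]; ring
        have h4 : (∫ t in Set.Ioc (0:ℝ) T, ∑ k, p t k * g k) / σ2 ≤ T * P * G / σ2 := by
          gcongr
        linarith
      linarith
    calc (1/T) * ∫ t in Set.Ioc (0:ℝ) T, Real.logb 2 (1 + S t)
        ≤ (1/T) * (T * L) := by
          apply mul_le_mul_of_nonneg_left (hint.trans hh_val) (by positivity)
      _ = L := by field_simp
  -- the achieving strategy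
  have hach : ∃ v p, Feasible 1 K Δ Lmax T P v p ∧
      L = avgRate 1 K lam lamg d Dx σ2 T w v p := by
    have hIoc : MeasurableSet (Set.Ioc (0:ℝ) T) := measurableSet_Ioc
    have hvolR : (volume (Set.Ioc (0:ℝ) T)).toReal = T := by
      rw [Real.volume_Ioc, sub_zero, ENNReal.toReal_ofReal hT.le]
    set g' : ℕ → ℝ := fun j => if h : j < K then g ⟨j, h⟩ else 0 with hg'_def
    have hg'nn : ∀ j, 0 ≤ g' j := by
      intro j
      show (0:ℝ) ≤ if h : j < K then g ⟨j, h⟩ else 0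
      split
      · exact (hg _).le
      · exact le_refl 0
    set F : ℕ → ℝ := fun m => T / G * ∑ j ∈ Finset.range m, g' j with hF_def
    have hTG : 0 < T / G := div_pos hT hG
    have hFmono : Monotone F := by
      intro a b hab
      exact mul_le_mul_of_nonneg_left
        (Finset.sum_le_sum_of_subset_of_nonneg (Finset.range_subset_range.2 hab)
          (fun j _ _ => hg'nn j)) hTG.le
    have hF0 : F 0 = 0 := by
      show T / G * ∑ j ∈ Finset.range 0, g' j = 0
      rw [Finset.sum_range_zero, mul_zero]
    have hFK : F K = T := by
      show T / G * ∑ j ∈ Finset.range K, g' j = T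
      have e1 : ∑ j ∈ Finset.range K, g' j = G := by
        rw [hG_def, ← Fin.sum_univ_eq_sum_range]
        refine Finset.sum_congr rfl fun k _ => ?_
        show (if h : (k:ℕ) < K then g ⟨k, h⟩ else 0) = g k
        rw [dif_pos k.isLt]
      rw [e1]
      exact div_mul_cancel₀ T hG.ne'
    have hstep : ∀ k : Fin K, F ((k:ℕ)+1) = F (k:ℕ) + T/G * g k := by
      intro k
      show T / G * ∑ j ∈ Finset.range ((k:ℕ)+1), g' j
        = T / G * ∑ j ∈ Finset.range (k:ℕ), g' j + T/G * g k
      rw [Finset.sum_range_succ, mul_add]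
      congr 1
      show T / G * (if h : (k:ℕ) < K then g ⟨k, h⟩ else 0) = T / G * g k
      rw [dif_pos k.isLt]
    set I : Fin K → Set ℝ := fun k => Set.Ioc (F (k:ℕ)) (F ((k:ℕ)+1)) with hI_def
    have hI_meas : ∀ k, MeasurableSet (I k) := fun k => measurableSet_Ioc
    have hIsub : ∀ k, I k ⊆ Set.Ioc (0:ℝ) T := by
      intro k
      refine Set.Ioc_subset_Ioc ?_ ?_
      · rw [← hF0]; exact hFmono (Nat.zero_le _)
      · rw [← hFK]; exact hFmono k.isLt
    have hdisj : ∀ j k : Fin K, j ≠ k → ∀ t, t ∈ I j → t ∉ I k := by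
      intro j k hjk t htj htk
      have hne : (j:ℕ) ≠ (k:ℕ) := fun e => hjk (Fin.ext e)
      rcases hne.lt_or_gt with hlt | hlt
      · have : F ((j:ℕ)+1) ≤ F (k:ℕ) := hFmono hlt
        exact absurd htk.1 (by linarith [htj.2])
      · have : F ((k:ℕ)+1) ≤ F (j:ℕ) := hFmono hlt
        exact absurd htj.1 (by linarith [htk.2])
    have hexists : ∀ t ∈ Set.Ioc (0:ℝ) T, ∃ k : Fin K, t ∈ I k := by
      intro t ht
      obtain ⟨m, hm, hmem⟩ := exists_interval hFmono (hF0 ▸ ht.1) (hFK ▸ ht.2)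
      exact ⟨⟨m, hm⟩, hmem⟩
    set vs : ℝ → Fin 1 → ℝ :=
      fun t _ => ∑ k, (I k).indicator (fun _ => (w k).1) t with hvs_def
    set ps : ℝ → Fin K → ℝ :=
      fun t k => (I k).indicator (fun _ => P * G / g k) t with hps_def
    have hvs_eq : ∀ (k : Fin K) (t : ℝ), t ∈ I k → ∀ i, vs t i = (w k).1 := by
      intro k t htk i
      show ∑ j, (I j).indicator (fun _ => (w j).1) t = (w k).1
      rw [Finset.sum_eq_single_of_mem k (Finset.mem_univ k)]
      · exact Set.indicator_of_mem htk _
      · intro j _ hj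
        exact Set.indicator_of_notMem (fun hmem => hdisj k j (Ne.symm hj) t htk hmem) _
    have hps_mem : ∀ (k : Fin K) (t : ℝ), t ∈ I k → ps t k = P * G / g k :=
      fun k t htk => Set.indicator_of_mem htk _
    have hps_nmem : ∀ (k j : Fin K) (t : ℝ), t ∈ I k → j ≠ k → ps t j = 0 :=
      fun k j t htk hj =>
        Set.indicator_of_notMem (fun hmem => hdisj k j (Ne.symm hj) t htk hmem) _
    refine ⟨vs, ps, ⟨?_, ?_, ?_, ?_, ?_⟩, ?_⟩
    · -- Measurable vs
      apply measurable_pi_lambda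
      intro i
      apply Finset.measurable_sum
      intro k _
      exact Measurable.indicator measurable_const (hI_meas k)
    · -- Measurable ps
      apply measurable_pi_lambda
      intro k
      exact Measurable.indicator measurable_const (hI_meas k)
    · -- Vfeas
      intro t ht
      obtain ⟨k, htk⟩ := hexists t ht
      refine ⟨?_, ?_, ?_⟩
      · intro i _
        rw [hvs_eq k t htk i]
        exact (hx k).1
      · intro i j hij
        have h1 := i.isLt
        have h2 := j.isLt
        omega
      · intro i _
        rw [hvs_eq k t htk i]
        exact (hx k).2
    · -- nonneg powers
      intro t ht k
      exact Set.indicator_nonneg (fun _ _ => div_nonneg (mul_pos hP hG).le (hg k).le) t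
    · -- budget
      intro k
      have e : (fun t => ENNReal.ofReal (ps t k))
          = (I k).indicator (fun _ => ENNReal.ofReal (P * G / g k)) := by
        funext t
        by_cases h : t ∈ I k
        · rw [hps_mem k t h, Set.indicator_of_mem h]
        · rw [show ps t k = 0 from Set.indicator_of_notMem h _, Set.indicator_of_notMem h,
            ENNReal.ofReal_zero]
      rw [e, lintegral_indicator (hI_meas k)]
      rw [setLIntegral_const, Measure.restrict_apply (hI_meas k),
        Set.inter_eq_self_of_subset_left (hIsub k)]
      have hlen : volume (I k) = ENNReal.ofReal (T / G * g k) := by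
        rw [hI_def]
        show volume (Set.Ioc (F (k:ℕ)) (F ((k:ℕ)+1))) = _
        rw [Real.volume_Ioc, hstep k]
        ring_nf
      rw [hlen, ← ENNReal.ofReal_mul (div_nonneg (mul_pos hP hG).le (hg k).le)]
      apply le_of_eq
      congr 1
      calc P * G / g k * (T / G * g k) = (T/G*G) * (P / g k * g k) := by ring
        _ = T * P := by rw [div_mul_cancel₀ T hG.ne', div_mul_cancel₀ P (hg k).ne']
    · -- the rate
      rw [avgRate]
      have hcongr : ∀ t ∈ Set.Ioc (0:ℝ) T,
          Real.logb 2 (1 + (∑ j, ps t j * gain 1 lam lamg d Dx (vs t) (w j))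
            / ((1:ℕ) * σ2)) = Real.logb 2 (1 + c) := by
        intro t ht
        obtain ⟨k, htk⟩ := hexists t ht
        have hsum : ∑ j, ps t j * gain 1 lam lamg d Dx (vs t) (w j) = P * G := by
          rw [Finset.sum_eq_single_of_mem k (Finset.mem_univ k)]
          · rw [hps_mem k t htk, hgain, hvs_eq k t htk 0, sub_self,
              zero_pow two_ne_zero, zero_add]
            have : η / ((w k).2.1 ^ 2 + d ^ 2) = g k := rfl
            rw [this, div_mul_cancel₀ _ (hg k).ne']
          · intro j _ hj
            rw [hps_nmem k j t htk hj, zero_mul]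
        rw [hsum, Nat.cast_one, one_mul, hc_def]
      rw [setIntegral_congr_fun hIoc hcongr, setIntegral_const, measureReal_def, hvolR, smul_eq_mul,
        hL_def]
      field_simp
  obtain ⟨v₀, p₀, hF₀, hL₀⟩ := hach
  have hmemL : L ∈ {r : ℝ | ∃ v p, Feasible 1 K Δ Lmax T P v p ∧
      r = avgRate 1 K lam lamg d Dx σ2 T w v p} := ⟨v₀, p₀, hF₀, hL₀⟩
  apply le_antisymm
  · apply csSup_le ⟨L, hmemL⟩
    rintro r ⟨v, p, hF, rfl⟩
    exact hub v p hF
  · refine le_csSup ⟨L, ?_⟩ hmemL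
    rintro r ⟨v, p, hF, rfl⟩
    exact hub v p hF
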